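/- Assume H is finite-dimensional and let α, β ∈ Aut_Hopf(H). Then End(H_{α,β}) = End(H_{βα⁻¹}) as algebras in _H𝒴𝒟^H, where H_{α,β} is viewed as an (α,β)-Yetter-Drinfeld module and H_{βα⁻¹} = H_{id,βα⁻¹} as an (id,βα⁻¹)-Yetter-Drinfeld module. -/

import Mathlib

open TensorProduct

noncomputable section

namespace GYD

variable (k H : Type) [Field k] [Ring H] [HopfAlgebra k H]

/-- `φ` is a Hopf algebra automorphism of `H` (a linear equivalence which is both an
algebra morphism and a coalgebra morphism). -/
def IsHopfAut (φ : H ≃ₗ[k] H) : Prop :=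
  (∀ x y : H, φ (x * y) = φ x * φ y) ∧ (φ 1 = 1) ∧
  (∀ h : H, Coalgebra.comul (R := k) (φ h)
      = TensorProduct.map φ.toLinearMap φ.toLinearMap (Coalgebra.comul (R := k) h)) ∧
  (∀ h : H, Coalgebra.counit (R := k) (φ h) = Coalgebra.counit (R := k) h)

/-- `Sinv` is a two-sided inverse of the antipode of `H`. -/
def IsAntipodeInv (Sinv : H → H) : Prop :=
  (∀ h : H, HopfAlgebra.antipode (R := k) (Sinv h) = h) ∧
  (∀ h : H, Sinv (HopfAlgebra.antipode (R := k) h) = h)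

/-- The data `(act, coact)` makes `M` an `(α, β)`-Yetter-Drinfeld module over `H`:
`M` is a left `H`-module, a right `H`-comodule, and the compatibility
`(h·m)₍₀₎ ⊗ (h·m)₍₁₎ = h₂·m₍₀₎ ⊗ β(h₃) m₍₁₎ α(Sinv(h₁))` holds (expressed via
arbitrary finite representations of `(Δ ⊗ id)(Δ h)` and of `coact m`). -/
def IsYD (Sinv α β : H → H) {M : Type} [AddCommGroup M] [Module k M]
    (act : H →ₗ[k] M →ₗ[k] M) (coact : M →ₗ[k] M ⊗[k] H) : Prop :=
  (∀ m : M, act 1 m = m) ∧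
  (∀ (g h : H) (m : M), act (g * h) m = act g (act h m)) ∧
  (∀ m : M, LinearMap.rTensor H coact (coact m)
      = (TensorProduct.assoc k M H H).symm
          (LinearMap.lTensor M (Coalgebra.comul (R := k)) (coact m))) ∧
  (∀ m : M,
    TensorProduct.rid k M (LinearMap.lTensor M (Coalgebra.counit (R := k)) (coact m)) = m) ∧
  (∀ (h : H) (m : M) (s t : Finset ℕ) (a b c : ℕ → H) (m₀ : ℕ → M) (m₁ : ℕ → H),
    LinearMap.rTensor H (Coalgebra.comul (R := k)) (Coalgebra.comul (R := k) h)
        = ∑ i ∈ s, (a i ⊗ₜ[k] b i) ⊗ₜ[k] c i →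
    coact m = ∑ j ∈ t, m₀ j ⊗ₜ[k] m₁ j →
    coact (act h m) = ∑ i ∈ s, ∑ j ∈ t,
      act (b i) (m₀ j) ⊗ₜ[k] (β (c i) * m₁ j * α (Sinv (a i))))

/-- Characterization of the action `h · (m ⊗ n) = θ₁(h₁)·m ⊗ θ₂(h₂)·n` on `M ⊗ N`. -/
def TensorActChar (θ₁ θ₂ : H → H) {M N : Type} [AddCommGroup M] [Module k M]
    [AddCommGroup N] [Module k N]
    (actM : H →ₗ[k] M →ₗ[k] M) (actN : H →ₗ[k] N →ₗ[k] N)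
    (act : H →ₗ[k] (M ⊗[k] N) →ₗ[k] (M ⊗[k] N)) : Prop :=
  ∀ (h : H) (m : M) (n : N) (s : Finset ℕ) (p q : ℕ → H),
    Coalgebra.comul (R := k) h = ∑ i ∈ s, p i ⊗ₜ[k] q i →
    act h (m ⊗ₜ[k] n) = ∑ i ∈ s, actM (θ₁ (p i)) m ⊗ₜ[k] actN (θ₂ (q i)) n

/-- Characterization of the "type two" action `h · (m ⊗ n) = h₂·m ⊗ h₁·n` on `M ⊗ N`. -/
def TensorActCharTwo {M N : Type} [AddCommGroup M] [Module k M]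
    [AddCommGroup N] [Module k N]
    (actM : H →ₗ[k] M →ₗ[k] M) (actN : H →ₗ[k] N →ₗ[k] N)
    (act : H →ₗ[k] (M ⊗[k] N) →ₗ[k] (M ⊗[k] N)) : Prop :=
  ∀ (h : H) (m : M) (n : N) (s : Finset ℕ) (p q : ℕ → H),
    Coalgebra.comul (R := k) h = ∑ i ∈ s, p i ⊗ₜ[k] q i →
    act h (m ⊗ₜ[k] n) = ∑ i ∈ s, actM (q i) m ⊗ₜ[k] actN (p i) n

/-- Characterization of the coaction `m ⊗ n ↦ (m₍₀₎ ⊗ n₍₀₎) ⊗ n₍₁₎ m₍₁₎` on `M ⊗ N`. -/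
def TensorCoactChar {M N : Type} [AddCommGroup M] [Module k M]
    [AddCommGroup N] [Module k N]
    (coactM : M →ₗ[k] M ⊗[k] H) (coactN : N →ₗ[k] N ⊗[k] H)
    (coact : M ⊗[k] N →ₗ[k] (M ⊗[k] N) ⊗[k] H) : Prop :=
  ∀ (m : M) (n : N) (s t : Finset ℕ) (m₀ : ℕ → M) (m₁ : ℕ → H) (n₀ : ℕ → N) (n₁ : ℕ → H),
    coactM m = ∑ i ∈ s, m₀ i ⊗ₜ[k] m₁ i →
    coactN n = ∑ j ∈ t, n₀ j ⊗ₜ[k] n₁ j →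
    coact (m ⊗ₜ[k] n) = ∑ i ∈ s, ∑ j ∈ t, (m₀ i ⊗ₜ[k] n₀ j) ⊗ₜ[k] (n₁ j * m₁ i)

/-- Characterization of the "type two" coaction `m ⊗ n ↦ (m₍₀₎ ⊗ n₍₀₎) ⊗ m₍₁₎ n₍₁₎`. -/
def TensorCoactCharTwo {M N : Type} [AddCommGroup M] [Module k M]
    [AddCommGroup N] [Module k N]
    (coactM : M →ₗ[k] M ⊗[k] H) (coactN : N →ₗ[k] N ⊗[k] H)
    (coact : M ⊗[k] N →ₗ[k] (M ⊗[k] N) ⊗[k] H) : Prop :=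
  ∀ (m : M) (n : N) (s t : Finset ℕ) (m₀ : ℕ → M) (m₁ : ℕ → H) (n₀ : ℕ → N) (n₁ : ℕ → H),
    coactM m = ∑ i ∈ s, m₀ i ⊗ₜ[k] m₁ i →
    coactN n = ∑ j ∈ t, n₀ j ⊗ₜ[k] n₁ j →
    coact (m ⊗ₜ[k] n) = ∑ i ∈ s, ∑ j ∈ t, (m₀ i ⊗ₜ[k] n₀ j) ⊗ₜ[k] (m₁ i * n₁ j)

/-- Characterization of the action `(h · f)(m) = f (θ(h) · m)` on the dual space. -/
def DualActChar (θ : H → H) {M : Type} [AddCommGroup M] [Module k M]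
    (actM : H →ₗ[k] M →ₗ[k] M)
    (actD : H →ₗ[k] Module.Dual k M →ₗ[k] Module.Dual k M) : Prop :=
  ∀ (h : H) (f : Module.Dual k M) (m : M), actD h f m = f (actM (θ h) m)

/-- Characterization of the coaction `f₍₀₎(m) ⊗ f₍₁₎ = f(m₍₀₎) ⊗ σ(m₍₁₎)` on the dual space
(expressed through contraction against evaluation at each `m`). -/
def DualCoactChar (σ : H → H) {M : Type} [AddCommGroup M] [Module k M]
    (coactM : M →ₗ[k] M ⊗[k] H)
    (coactD : Module.Dual k M →ₗ[k] Module.Dual k M ⊗[k] H) : Prop :=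
  ∀ (f : Module.Dual k M) (m : M) (t : Finset ℕ) (m₀ : ℕ → M) (m₁ : ℕ → H),
    coactM m = ∑ j ∈ t, m₀ j ⊗ₜ[k] m₁ j →
    TensorProduct.lid k H (LinearMap.rTensor H (Module.Dual.eval k M m) (coactD f))
      = ∑ j ∈ t, f (m₀ j) • σ (m₁ j)

/-- Characterization of the action `(h · u)(m) = θ(h₁) · u (θ(S(h₂)) · m)` on `End(M)`. -/
def EndActChar (θ : H → H) {M : Type} [AddCommGroup M] [Module k M]
    (actM : H →ₗ[k] M →ₗ[k] M)
    (actE : H →ₗ[k] Module.End k M →ₗ[k] Module.End k M) : Prop :=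
  ∀ (h : H) (u : Module.End k M) (m : M) (s : Finset ℕ) (p q : ℕ → H),
    Coalgebra.comul (R := k) h = ∑ i ∈ s, p i ⊗ₜ[k] q i →
    actE h u m = ∑ i ∈ s,
      actM (θ (p i)) (u (actM (θ (HopfAlgebra.antipode (R := k) (q i))) m))

/-- Characterization of the coaction `u₍₀₎(m) ⊗ u₍₁₎ = u(m₍₀₎)₍₀₎ ⊗ Sinv(m₍₁₎) u(m₍₀₎)₍₁₎`
on `End(M)`, expressed through contraction against evaluation at each `m`. -/
def EndCoactChar (Sinv : H → H) {M : Type} [AddCommGroup M] [Module k M]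
    (coactM : M →ₗ[k] M ⊗[k] H)
    (coactE : Module.End k M →ₗ[k] Module.End k M ⊗[k] H) : Prop :=
  ∀ (u : Module.End k M) (m : M) (t : Finset ℕ) (m₀ : ℕ → M) (m₁ : ℕ → H)
    (r : ℕ → Finset ℕ) (n₀ : ℕ → ℕ → M) (n₁ : ℕ → ℕ → H),
    coactM m = ∑ j ∈ t, m₀ j ⊗ₜ[k] m₁ j →
    (∀ j ∈ t, coactM (u (m₀ j)) = ∑ l ∈ r j, n₀ j l ⊗ₜ[k] n₁ j l) →
    LinearMap.rTensor H (LinearMap.applyₗ (R := k) m) (coactE u)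
      = ∑ j ∈ t, ∑ l ∈ r j, n₀ j l ⊗ₜ[k] (Sinv (m₁ j) * n₁ j l)

/-- Characterization of the action `(h · u)(m) = θ(h₂) · u (θ(Sinv(h₁)) · m)` on `End(M)ᵒᵖ`. -/
def EndOpActChar (θ Sinv : H → H) {M : Type} [AddCommGroup M] [Module k M]
    (actM : H →ₗ[k] M →ₗ[k] M)
    (actE : H →ₗ[k] (Module.End k M)ᵐᵒᵖ →ₗ[k] (Module.End k M)ᵐᵒᵖ) : Prop :=
  ∀ (h : H) (u : (Module.End k M)ᵐᵒᵖ) (m : M) (s : Finset ℕ) (p q : ℕ → H),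
    Coalgebra.comul (R := k) h = ∑ i ∈ s, p i ⊗ₜ[k] q i →
    (actE h u).unop m = ∑ i ∈ s,
      actM (θ (q i)) (u.unop (actM (θ (Sinv (p i))) m))

/-- Characterization of the coaction `u₍₀₎(m) ⊗ u₍₁₎ = u(m₍₀₎)₍₀₎ ⊗ u(m₍₀₎)₍₁₎ S(m₍₁₎)`
on `End(M)ᵒᵖ`, expressed through contraction against evaluation at each `m`. -/
def EndOpCoactChar {M : Type} [AddCommGroup M] [Module k M]
    (coactM : M →ₗ[k] M ⊗[k] H)
    (coactE : (Module.End k M)ᵐᵒᵖ →ₗ[k] (Module.End k M)ᵐᵒᵖ ⊗[k] H) : Prop :=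
  ∀ (u : (Module.End k M)ᵐᵒᵖ) (m : M) (t : Finset ℕ) (m₀ : ℕ → M) (m₁ : ℕ → H)
    (r : ℕ → Finset ℕ) (n₀ : ℕ → ℕ → M) (n₁ : ℕ → ℕ → H),
    coactM m = ∑ j ∈ t, m₀ j ⊗ₜ[k] m₁ j →
    (∀ j ∈ t, coactM (u.unop (m₀ j)) = ∑ l ∈ r j, n₀ j l ⊗ₜ[k] n₁ j l) →
    LinearMap.rTensor H ((LinearMap.applyₗ (R := k) m).comp
        (MulOpposite.opLinearEquiv k).symm.toLinearMap) (coactE u)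
      = ∑ j ∈ t, ∑ l ∈ r j,
          n₀ j l ⊗ₜ[k] (n₁ j l * HopfAlgebra.antipode (R := k) (m₁ j))

/-- `A`, with the Yetter-Drinfeld structure `(act, coact)`, is an algebra in the braided
category of Yetter-Drinfeld modules over `H`. -/
def IsYDAlgebra (Sinv : H → H) {A : Type} [Ring A] [Algebra k A]
    (act : H →ₗ[k] A →ₗ[k] A) (coact : A →ₗ[k] A ⊗[k] H) : Prop :=
  IsYD k H Sinv id id act coact ∧
  (∀ (h : H) (a b : A) (s : Finset ℕ) (p q : ℕ → H),
    Coalgebra.comul (R := k) h = ∑ i ∈ s, p i ⊗ₜ[k] q i →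
    act h (a * b) = ∑ i ∈ s, act (p i) a * act (q i) b) ∧
  (∀ h : H, act h 1 = Coalgebra.counit (R := k) h • (1 : A)) ∧
  (coact 1 = (1 : A) ⊗ₜ[k] (1 : H)) ∧
  (∀ (a b : A) (s t : Finset ℕ) (a₀ : ℕ → A) (a₁ : ℕ → H) (b₀ : ℕ → A) (b₁ : ℕ → H),
    coact a = ∑ i ∈ s, a₀ i ⊗ₜ[k] a₁ i →
    coact b = ∑ j ∈ t, b₀ j ⊗ₜ[k] b₁ j →
    coact (a * b) = ∑ i ∈ s, ∑ j ∈ t, (a₀ i * b₀ j) ⊗ₜ[k] (b₁ j * a₁ i))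

/-- Characterization of the smash product multiplication
`(a # b)(a' # b') = a a'₍₀₎ # (a'₍₁₎ · b) b'` on `A ⊗ B`. -/
def SmashMulChar {A B : Type} [Ring A] [Algebra k A] [Ring B] [Algebra k B]
    (actB : H →ₗ[k] B →ₗ[k] B) (coactA : A →ₗ[k] A ⊗[k] H)
    (mul : (A ⊗[k] B) →ₗ[k] (A ⊗[k] B) →ₗ[k] (A ⊗[k] B)) : Prop :=
  ∀ (a a' : A) (b b' : B) (t : Finset ℕ) (a₀ : ℕ → A) (a₁ : ℕ → H),
    coactA a' = ∑ j ∈ t, a₀ j ⊗ₜ[k] a₁ j →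
    mul (a ⊗ₜ[k] b) (a' ⊗ₜ[k] b') = ∑ j ∈ t, (a * a₀ j) ⊗ₜ[k] (actB (a₁ j) b * b')

end GYD

namespace GYDAux

open Coalgebra

variable {k H : Type} [Field k] [Ring H] [HopfAlgebra k H]


lemma list_map_sum_eq {A M : Type} [AddCommMonoid M] [Zero A] (l : List A) (f : A → M) :
    (l.map f).sum = ∑ i ∈ Finset.range l.length, f (l.getD i 0) := by
  induction l with
  | nil => simp
  | cons a t ih =>
      rw [List.map_cons, List.sum_cons, List.length_cons, Finset.sum_range_succ']
      simp only [List.getD_cons_succ, List.getD_cons_zero, ih]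
      exact (add_comm _ _)

lemma exists_nat_repr {M N : Type} [AddCommGroup M] [Module k M] [AddCommGroup N] [Module k N]
    (x : M ⊗[k] N) :
    ∃ (s : Finset ℕ) (p : ℕ → M) (q : ℕ → N), x = ∑ i ∈ s, p i ⊗ₜ[k] q i := by
  obtain ⟨S, hS⟩ := TensorProduct.exists_finset x
  refine ⟨Finset.range S.toList.length,
    fun i => (S.toList.getD i 0).1, fun i => (S.toList.getD i 0).2, ?_⟩
  rw [hS, ← Finset.sum_map_toList, list_map_sum_eq S.toList (fun z => z.1 ⊗ₜ[k] z.2)]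



/-- convolution product on `H →ₗ[k] H`. -/
def conv (f g : H →ₗ[k] H) : H →ₗ[k] H :=
  LinearMap.mul' k H ∘ₗ TensorProduct.map f g ∘ₗ Coalgebra.comul

/-- the convolution unit `η ∘ ε`. -/
def convUnit : H →ₗ[k] H := Algebra.linearMap k H ∘ₗ Coalgebra.counit

lemma conv_repr {ι : Type*} (f g : H →ₗ[k] H) (a : H) (R : Coalgebra.Repr k a ι) :
    conv f g a = ∑ i ∈ R.index, f (R.left i) * g (R.right i) := by
  simp only [conv, LinearMap.comp_apply, ← R.eq, map_sum, TensorProduct.map_tmul,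
    LinearMap.mul'_apply]

lemma sum_counit_smul {ι : Type*} {a : H} (R : Coalgebra.Repr k a ι) :
    ∑ i ∈ R.index, Coalgebra.counit (R := k) (R.right i) • R.left i = a := by
  have h := congrArg (TensorProduct.rid k H) (Coalgebra.sum_tmul_counit_eq R)
  rw [map_sum] at h
  simp only [TensorProduct.rid_tmul, one_smul] at h
  exact h

lemma sum_smul_counit {ι : Type*} {a : H} (R : Coalgebra.Repr k a ι) :
    ∑ i ∈ R.index, Coalgebra.counit (R := k) (R.left i) • R.right i = a := by
  have h := congrArg (TensorProduct.lid k H) (Coalgebra.sum_counit_tmul_eq R)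
  rw [map_sum] at h
  simp only [TensorProduct.lid_tmul, one_smul] at h
  exact h

lemma conv_unit_right (f : H →ₗ[k] H) : conv f convUnit = f := by
  ext a
  rw [conv_repr f convUnit a (ℛ k a)]
  have := sum_counit_smul (ℛ k a)
  calc ∑ i ∈ (ℛ k a).index, f ((ℛ k a).left i) * convUnit ((ℛ k a).right i)
      = f (∑ i ∈ (ℛ k a).index, Coalgebra.counit (R := k) ((ℛ k a).right i) • (ℛ k a).left i) := by
        simp [convUnit, Algebra.algebraMap_eq_smul_one, map_sum, mul_smul_comm]
    _ = f a := by rw [this]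

lemma conv_unit_left (f : H →ₗ[k] H) : conv convUnit f = f := by
  ext a
  rw [conv_repr convUnit f a (ℛ k a)]
  have := sum_smul_counit (ℛ k a)
  calc ∑ i ∈ (ℛ k a).index, convUnit ((ℛ k a).left i) * f ((ℛ k a).right i)
      = f (∑ i ∈ (ℛ k a).index, Coalgebra.counit (R := k) ((ℛ k a).left i) • (ℛ k a).right i) := by
        simp [convUnit, Algebra.algebraMap_eq_smul_one, map_sum, smul_mul_assoc]
    _ = f a := by rw [this]

lemma conv_assoc (f g h : H →ₗ[k] H) : conv (conv f g) h = conv f (conv g h) := by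
  ext a
  have key := Coalgebra.sum_map_tmul_tmul_eq (R := k) f g h a (repr := ℛ k a)
    (a₁ := fun i => ℛ k _) (a₂ := fun i => ℛ k _)
  apply_fun (LinearMap.mul' k H ∘ₗ (LinearMap.mul' k H).lTensor H) at key
  simp only [map_sum, LinearMap.comp_apply, LinearMap.lTensor_tmul, LinearMap.mul'_apply] at key
  rw [conv_repr (conv f g) h a (ℛ k a), conv_repr f (conv g h) a (ℛ k a)]
  calc ∑ i ∈ (ℛ k a).index, conv f g ((ℛ k a).left i) * h ((ℛ k a).right i)
      = ∑ i ∈ (ℛ k a).index, ∑ j ∈ (ℛ k ((ℛ k a).left i)).index,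
          f ((ℛ k ((ℛ k a).left i)).left j) * (g ((ℛ k ((ℛ k a).left i)).right j)
            * h ((ℛ k a).right i)) := by
        refine Finset.sum_congr rfl fun i _ => ?_
        rw [conv_repr f g _ (ℛ k ((ℛ k a).left i)), Finset.sum_mul]
        exact Finset.sum_congr rfl fun j _ => mul_assoc _ _ _
    _ = ∑ i ∈ (ℛ k a).index, ∑ j ∈ (ℛ k ((ℛ k a).right i)).index,
          f ((ℛ k a).left i) * (g ((ℛ k ((ℛ k a).right i)).left j)
            * h ((ℛ k ((ℛ k a).right i)).right j)) := key.symm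
    _ = ∑ i ∈ (ℛ k a).index, f ((ℛ k a).left i) * conv g h ((ℛ k a).right i) := by
        refine Finset.sum_congr rfl fun i _ => ?_
        rw [conv_repr g h _ (ℛ k ((ℛ k a).right i)), Finset.mul_sum]

section Aut
variable {α : H ≃ₗ[k] H}
  (hmul : ∀ x y : H, α (x * y) = α x * α y) (hone : α 1 = 1)
  (hcomul : ∀ h : H, Coalgebra.comul (R := k) (α h)
      = TensorProduct.map α.toLinearMap α.toLinearMap (Coalgebra.comul (R := k) h))
  (hcounit : ∀ h : H, Coalgebra.counit (R := k) (α h) = Coalgebra.counit (R := k) h)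

/-- push a comul representation through an automorphism -/
def Coalgebra.Repr.mapAut {ι : Type*} (a : H) (R : Coalgebra.Repr k a ι)
    (hcomul : ∀ h : H, Coalgebra.comul (R := k) (α h)
      = TensorProduct.map α.toLinearMap α.toLinearMap (Coalgebra.comul (R := k) h)) :
    Coalgebra.Repr k (α a) ι where
  index := R.index
  left := fun i => α (R.left i)
  right := fun i => α (R.right i)
  eq := by
    rw [hcomul a, ← R.eq, map_sum]
    simp [TensorProduct.map_tmul]

include hmul hone in
lemma conv_autS_aut :
    conv (α.toLinearMap ∘ₗ HopfAlgebra.antipode (R := k)) α.toLinearMap = convUnit := by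
  ext a
  rw [conv_repr _ _ a (ℛ k a)]
  simp only [LinearMap.comp_apply, LinearEquiv.coe_coe]
  calc ∑ i ∈ (ℛ k a).index,
        α (HopfAlgebra.antipode (R := k) ((ℛ k a).left i)) * α ((ℛ k a).right i)
      = α (∑ i ∈ (ℛ k a).index,
          HopfAlgebra.antipode (R := k) ((ℛ k a).left i) * (ℛ k a).right i) := by
        rw [map_sum]; exact Finset.sum_congr rfl fun i _ => (hmul _ _).symm
    _ = α (Coalgebra.counit (R := k) a • 1) := by rw [HopfAlgebra.sum_antipode_mul_eq_smul]
    _ = Coalgebra.counit (R := k) a • (1 : H) := by rw [map_smul, hone]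
    _ = convUnit a := by simp [convUnit, Algebra.algebraMap_eq_smul_one]

include hcomul hcounit in
lemma conv_aut_Saut :
    conv α.toLinearMap (HopfAlgebra.antipode (R := k) ∘ₗ α.toLinearMap) = convUnit := by
  ext a
  rw [conv_repr _ _ a (ℛ k a)]
  simp only [LinearMap.comp_apply, LinearEquiv.coe_coe]
  have h := HopfAlgebra.sum_mul_antipode_eq_smul (Coalgebra.Repr.mapAut a (ℛ k a) hcomul)
  calc ∑ i ∈ (ℛ k a).index,
        α ((ℛ k a).left i) * HopfAlgebra.antipode (R := k) (α ((ℛ k a).right i))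
      = Coalgebra.counit (R := k) (α a) • (1 : H) := h
    _ = Coalgebra.counit (R := k) a • (1 : H) := by rw [hcounit]
    _ = convUnit a := by simp [convUnit, Algebra.algebraMap_eq_smul_one]

include hmul hone hcomul hcounit in
lemma antipode_aut_comm (a : H) :
    HopfAlgebra.antipode (R := k) (α a) = α (HopfAlgebra.antipode (R := k) a) := by
  have key : α.toLinearMap ∘ₗ HopfAlgebra.antipode (R := k)
      = HopfAlgebra.antipode (R := k) ∘ₗ α.toLinearMap := by
    calc α.toLinearMap ∘ₗ HopfAlgebra.antipode (R := k)
        = conv (α.toLinearMap ∘ₗ HopfAlgebra.antipode (R := k)) convUnit :=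
          (conv_unit_right _).symm
      _ = conv (α.toLinearMap ∘ₗ HopfAlgebra.antipode (R := k))
            (conv α.toLinearMap (HopfAlgebra.antipode (R := k) ∘ₗ α.toLinearMap)) := by
          rw [conv_aut_Saut hcomul hcounit]
      _ = conv (conv (α.toLinearMap ∘ₗ HopfAlgebra.antipode (R := k)) α.toLinearMap)
            (HopfAlgebra.antipode (R := k) ∘ₗ α.toLinearMap) := (conv_assoc _ _ _).symm
      _ = conv convUnit (HopfAlgebra.antipode (R := k) ∘ₗ α.toLinearMap) := by
          rw [conv_autS_aut hmul hone]
      _ = HopfAlgebra.antipode (R := k) ∘ₗ α.toLinearMap := conv_unit_left _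
  exact (LinearMap.congr_fun key a).symm

include hmul hone hcomul hcounit in
lemma sinv_aut_comm {Sinv : H → H}
    (h1 : ∀ h : H, HopfAlgebra.antipode (R := k) (Sinv h) = h)
    (h2 : ∀ h : H, Sinv (HopfAlgebra.antipode (R := k) h) = h) (a : H) :
    Sinv (α a) = α (Sinv a) := by
  have : α a = HopfAlgebra.antipode (R := k) (α (Sinv a)) := by
    rw [antipode_aut_comm hmul hone hcomul hcounit, h1]
  rw [this, h2]

include hcomul in
lemma comul_symm_aut (a : H) :
    Coalgebra.comul (R := k) (α.symm a)
      = TensorProduct.map α.symm.toLinearMap α.symm.toLinearMap (Coalgebra.comul (R := k) a) := by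
  have h := hcomul (α.symm a)
  rw [α.apply_symm_apply] at h
  have hz : ∀ z : H ⊗[k] H,
      TensorProduct.map α.symm.toLinearMap α.symm.toLinearMap
        (TensorProduct.map α.toLinearMap α.toLinearMap z) = z := by
    intro z
    rw [← LinearMap.comp_apply, ← TensorProduct.map_comp]
    have e : α.symm.toLinearMap ∘ₗ α.toLinearMap = LinearMap.id := by ext x; simp
    rw [e, TensorProduct.map_id, LinearMap.id_apply]
  rw [h, hz]

end Aut



lemma tensor_repr_basis {ι M : Type} [Fintype ι] [AddCommGroup M] [Module k M]
    (b : Module.Basis ι k H) (z : M ⊗[k] H) :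
    z = ∑ i, (TensorProduct.rid k M (LinearMap.lTensor M (b.coord i) z)) ⊗ₜ[k] b i := by
  induction z using TensorProduct.induction_on with
  | zero => simp
  | tmul m h =>
      simp only [LinearMap.lTensor_tmul, TensorProduct.rid_tmul]
      calc m ⊗ₜ[k] h = m ⊗ₜ[k] (∑ i, b.repr h i • b i) := by rw [Module.Basis.sum_repr]
        _ = ∑ i, (b.coord i h • m) ⊗ₜ[k] b i := by
            rw [tmul_sum]
            exact Finset.sum_congr rfl fun i _ => by
              rw [Module.Basis.coord_apply, ← TensorProduct.smul_tmul]
  | add x y hx hy =>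
      conv_lhs => rw [hx, hy]
      simp only [map_add, TensorProduct.add_tmul, Finset.sum_add_distrib]

lemma tensor_eq_of_apply [FiniteDimensional k H] {x y : Module.End k H ⊗[k] H}
    (hxy : ∀ m : H, LinearMap.rTensor H (LinearMap.applyₗ (R := k) m) x
        = LinearMap.rTensor H (LinearMap.applyₗ (R := k) m) y) : x = y := by
  set b := Module.finBasis k H with hb
  have comm : ∀ (i : Fin (Module.finrank k H)) (z : Module.End k H ⊗[k] H) (m : H),
      (TensorProduct.rid k (Module.End k H)
          (LinearMap.lTensor (Module.End k H) (b.coord i) z)) m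
        = TensorProduct.rid k H (LinearMap.lTensor H (b.coord i)
            (LinearMap.rTensor H (LinearMap.applyₗ (R := k) m) z)) := by
    intro i z m
    induction z using TensorProduct.induction_on with
    | zero => simp
    | tmul u h =>
        simp [TensorProduct.rid_tmul, LinearMap.smul_apply]
    | add z w hz hw =>
        simp only [map_add, LinearMap.add_apply, hz, hw]
  rw [tensor_repr_basis b x, tensor_repr_basis b y]
  refine Finset.sum_congr rfl fun i _ => ?_
  congr 1
  ext m
  rw [comm i x m, comm i y m, hxy m]


end GYDAux


theorem statement_10
    (k H : Type) [Field k] [Ring H] [HopfAlgebra k H] [FiniteDimensional k H]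
    (Sinv : H → H) (hS : GYD.IsAntipodeInv k H Sinv)
    (α β : H ≃ₗ[k] H)
    (hα : GYD.IsHopfAut k H α) (hβ : GYD.IsHopfAut k H β)
    -- the module H_{α,β} : action h · h' = β(h₂) h' α(Sinv(h₁)), regular coaction
    (act₁ : H →ₗ[k] H →ₗ[k] H)
    (hact₁ : ∀ (h h' : H) (s : Finset ℕ) (p q : ℕ → H),
        Coalgebra.comul (R := k) h = ∑ i ∈ s, p i ⊗ₜ[k] q i →
        act₁ h h' = ∑ i ∈ s, β (q i) * h' * α (Sinv (p i)))
    -- the module H_{βα⁻¹} = H_{id, βα⁻¹} : action h · h' = βα⁻¹(h₂) h' Sinv(h₁)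
    (act₂ : H →ₗ[k] H →ₗ[k] H)
    (hact₂ : ∀ (h h' : H) (s : Finset ℕ) (p q : ℕ → H),
        Coalgebra.comul (R := k) h = ∑ i ∈ s, p i ⊗ₜ[k] q i →
        act₂ h h' = ∑ i ∈ s, β (α.symm (q i)) * h' * Sinv (p i))
    -- End(H_{α,β})
    (actE₁ : H →ₗ[k] Module.End k H →ₗ[k] Module.End k H)
    (coactE₁ : Module.End k H →ₗ[k] Module.End k H ⊗[k] H)
    (hactE₁ : GYD.EndActChar k H ⇑α.symm act₁ actE₁)
    (hcoactE₁ : GYD.EndCoactChar k H Sinv (Coalgebra.comul (R := k)) coactE₁)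
    -- End(H_{βα⁻¹})
    (actE₂ : H →ₗ[k] Module.End k H →ₗ[k] Module.End k H)
    (coactE₂ : Module.End k H →ₗ[k] Module.End k H ⊗[k] H)
    (hactE₂ : GYD.EndActChar k H id act₂ actE₂)
    (hcoactE₂ : GYD.EndCoactChar k H Sinv (Coalgebra.comul (R := k)) coactE₂) :
    actE₁ = actE₂ ∧ coactE₁ = coactE₂ := by
  have key : ∀ (g x : H), act₁ (α.symm g) x = act₂ g x := by
    intro g x
    obtain ⟨s, p, q, hpq⟩ := GYDAux.exists_nat_repr (Coalgebra.comul (R := k) g)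
    have hcs : Coalgebra.comul (R := k) (α.symm g)
        = ∑ i ∈ s, α.symm (p i) ⊗ₜ[k] α.symm (q i) := by
      rw [GYDAux.comul_symm_aut hα.2.2.1 g, hpq, map_sum]
      simp
    rw [hact₁ (α.symm g) x s (fun i => α.symm (p i)) (fun i => α.symm (q i)) hcs,
        hact₂ g x s p q hpq]
    refine Finset.sum_congr rfl fun i _ => ?_
    have hsi : Sinv (p i) = α (Sinv (α.symm (p i))) := by
      have h := GYDAux.sinv_aut_comm hα.1 hα.2.1 hα.2.2.1 hα.2.2.2 hS.1 hS.2 (α.symm (p i))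
      rw [α.apply_symm_apply] at h
      exact h
    rw [hsi]
  constructor
  · refine LinearMap.ext fun h => LinearMap.ext fun u => LinearMap.ext fun m => ?_
    obtain ⟨s, p, q, hpq⟩ := GYDAux.exists_nat_repr (Coalgebra.comul (R := k) h)
    rw [hactE₁ h u m s p q hpq, hactE₂ h u m s p q hpq]
    refine Finset.sum_congr rfl fun i _ => ?_
    rw [key, key]
    rfl
  · refine LinearMap.ext fun u => GYDAux.tensor_eq_of_apply (fun m => ?_)
    obtain ⟨t, m₀, m₁, hm⟩ := GYDAux.exists_nat_repr (Coalgebra.comul (R := k) m)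
    have hch : ∀ j : ℕ, ∃ (r : Finset ℕ) (n₀ n₁ : ℕ → H),
        Coalgebra.comul (R := k) (u (m₀ j)) = ∑ l ∈ r, n₀ l ⊗ₜ[k] n₁ l :=
      fun j => GYDAux.exists_nat_repr _
    choose r n₀ n₁ hn using hch
    rw [hcoactE₁ u m t m₀ m₁ r n₀ n₁ hm (fun j _ => hn j),
        hcoactE₂ u m t m₀ m₁ r n₀ n₁ hm (fun j _ => hn j)]


end
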